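/- Define superoperators 𝒜(ρ) = (A*ρ + ρ*A)/2, 𝒝(ρ) = (B*ρ + ρ*B)/2, 𝒞(ρ) = (C*ρ + ρ*C)/2 on n×n complex matrices. Then for any density matrix ρ, Tr(ρ * 𝒜(𝒝(𝒞(1)))) - Tr(ρ * 𝒝(𝒜(𝒞(1)))) = Tr(ρ * [[A,B],C]) / 4. -/
import Mathlib


open ComplexOrder

theorem weak_measurement_time_order
    {n : ℕ} (A B C ρ : Matrix (Fin n) (Fin n) ℂ)
    (hA : A.IsHermitian) (hB : B.IsHermitian) (hC : C.IsHermitian)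
    (hρ : ρ.PosSemidef) (hρ1 : ρ.trace = 1) :
    (let sop : Matrix (Fin n) (Fin n) ℂ → Matrix (Fin n) (Fin n) ℂ →
        Matrix (Fin n) (Fin n) ℂ := fun M σ => (1/2 : ℂ) • (M * σ + σ * M);
     (ρ * sop A (sop B (sop C 1))).trace - (ρ * sop B (sop A (sop C 1))).trace)
      = (ρ * ((A * B - B * A) * C - C * (A * B - B * A))).trace / 4 := by
  simp only
  rw [← Matrix.trace_sub, ← Matrix.mul_sub]
  have key : ((1/2 : ℂ) • (A * ((1/2 : ℂ) • (B * ((1/2 : ℂ) • (C * 1 + 1 * C)) +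
        ((1/2 : ℂ) • (C * 1 + 1 * C)) * B)) +
        ((1/2 : ℂ) • (B * ((1/2 : ℂ) • (C * 1 + 1 * C)) +
        ((1/2 : ℂ) • (C * 1 + 1 * C)) * B)) * A)) -
      ((1/2 : ℂ) • (B * ((1/2 : ℂ) • (A * ((1/2 : ℂ) • (C * 1 + 1 * C)) +
        ((1/2 : ℂ) • (C * 1 + 1 * C)) * A)) +
        ((1/2 : ℂ) • (A * ((1/2 : ℂ) • (C * 1 + 1 * C)) +
        ((1/2 : ℂ) • (C * 1 + 1 * C)) * A)) * B)) =
      (1/4 : ℂ) • ((A * B - B * A) * C - C * (A * B - B * A)) := by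
    simp only [mul_one, one_mul, smul_add, Matrix.smul_mul, Matrix.mul_smul, smul_smul,
      smul_sub, smul_smul]
    noncomm_ring [Matrix.smul_mul, Matrix.mul_smul, smul_smul, smul_add, smul_sub]
    module
  rw [key, Matrix.mul_smul, Matrix.trace_smul, smul_eq_mul]
  ring
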